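/- Let F be a graph with at least one edge. Then every bipartite graph H is F-abundant. -/

import Mathlib

open Finset

/-- `G` contains a copy of `F`, i.e. a subgraph isomorphic to `F`
(equivalently an injective graph homomorphism from `F`). -/
def ContainsCopy {α β : Type*} (F : SimpleGraph α) (G : SimpleGraph β) : Prop :=
  ∃ f : F →g G, Function.Injective f

/-- The number of copies of `H` in `G`, i.e. the number of subgraphs of `G`
isomorphic to `H`. -/
noncomputable def copyCount {α β : Type*} (H : SimpleGraph α) (G : SimpleGraph β) : ℕ :=
  {G' : G.Subgraph | Nonempty (H ≃g G'.coe)}.ncard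

/-- `G` is `ε`-far from `F`-free: every graph obtained from `G` by deleting fewer than
`ε·|V(G)|²` edges still contains a copy of `F`. -/
def FarFromFree {α β : Type*} (F : SimpleGraph α) (G : SimpleGraph β) (ε : ℝ) : Prop :=
  ∀ G' : SimpleGraph β, G' ≤ G →
    ((G.edgeSet \ G'.edgeSet).ncard : ℝ) < ε * (Nat.card β : ℝ) ^ 2 →
    ContainsCopy F G'

/-- `H` is `F`-abundant: there are constants `c, C > 0` such that for every `ε ∈ (0,1)`
and all sufficiently large `n`, every `n`-vertex graph that is `ε`-far from `F`-free
contains at least `c·ε^C·n^{|V(H)|}` copies of `H`. -/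
def Abundant {α β : Type*} (F : SimpleGraph α) (H : SimpleGraph β) : Prop :=
  ∃ c C : ℝ, 0 < c ∧ 0 < C ∧ ∀ ε : ℝ, 0 < ε → ε < 1 → ∃ n₀ : ℕ, ∀ n : ℕ, n₀ ≤ n →
    ∀ G : SimpleGraph (Fin n), FarFromFree F G ε →
      c * ε ^ C * (n : ℝ) ^ (Nat.card β) ≤ (copyCount H G : ℝ)

instance subgraphFinite {V : Type*} [Finite V] {G : SimpleGraph V} : Finite G.Subgraph := by
  have h : Function.Injective (fun G' : G.Subgraph => (G'.verts, G'.Adj)) := by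
    intro x y hxy
    exact SimpleGraph.Subgraph.ext (congrArg Prod.fst hxy) (congrArg Prod.snd hxy)
  exact Finite.of_injective _ h

/-- The number of functions whose values all lie in a fixed finset. -/
lemma card_pi_filter {A V : Type*} [Fintype A] [Fintype V] [DecidableEq A] [DecidableEq V]
    (s : Finset V) :
    ((univ : Finset (A → V)).filter (fun f => ∀ a, f a ∈ s)).card
      = s.card ^ Fintype.card A := by
  have h : ((univ : Finset (A → V)).filter (fun f => ∀ a, f a ∈ s))
      = Fintype.piFinset (fun _ : A => s) := by
    ext f
    simp [Fintype.mem_piFinset]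
  rw [h, Fintype.card_piFinset]
  simp

/-- KST-type counting: lower bound for the number of "bipartite-pattern" maps. -/
lemma kst_count {A B V : Type*} [Fintype A] [Fintype B] [Fintype V]
    [DecidableEq A] [DecidableEq B] [DecidableEq V]
    (G : SimpleGraph V) [DecidableRel G.Adj] (ε : ℝ) (hε0 : 0 ≤ ε)
    (hN : 0 < Fintype.card V)
    (hm : ε * (Fintype.card V : ℝ) ^ 2 ≤ ∑ v, (G.degree v : ℝ)) :
    ε ^ (Fintype.card A * Fintype.card B)
        * (Fintype.card V : ℝ) ^ (Fintype.card A + Fintype.card B)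
      ≤ (((univ : Finset ((A → V) × (B → V))).filter
          (fun p => ∀ a b, G.Adj (p.1 a) (p.2 b))).card : ℝ) := by
  classical
  set N := Fintype.card V with hNdef
  rcases Nat.eq_zero_or_pos (Fintype.card A) with ha0 | hapos
  · have : IsEmpty A := Fintype.card_eq_zero_iff.mp ha0
    have hfull : ((univ : Finset ((A → V) × (B → V))).filter
        (fun p => ∀ a b, G.Adj (p.1 a) (p.2 b))) = univ :=
      Finset.filter_true_of_mem fun p _ => fun i => isEmptyElim i
    rw [hfull, Finset.card_univ, Fintype.card_prod, Fintype.card_fun, Fintype.card_fun, ha0]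
    push_cast
    simp [pow_zero]
    exact le_rfl
  rcases Nat.eq_zero_or_pos (Fintype.card B) with hb0 | hbpos
  · have : IsEmpty B := Fintype.card_eq_zero_iff.mp hb0
    have hfull : ((univ : Finset ((A → V) × (B → V))).filter
        (fun p => ∀ a b, G.Adj (p.1 a) (p.2 b))) = univ :=
      Finset.filter_true_of_mem fun p _ => fun i j => isEmptyElim j
    rw [hfull, Finset.card_univ, Fintype.card_prod, Fintype.card_fun, Fintype.card_fun, hb0]
    push_cast
    simp [pow_zero]
    exact le_rfl
  obtain ⟨a', hA⟩ : ∃ a', Fintype.card A = a' + 1 := ⟨Fintype.card A - 1, by omega⟩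
  obtain ⟨b', hB⟩ : ∃ b', Fintype.card B = b' + 1 := ⟨Fintype.card B - 1, by omega⟩
  set nb : (B → V) → Finset V := fun g => univ.filter (fun v => ∀ j : B, G.Adj v (g j))
    with hnbdef
  -- step 1 : the count is ∑_g |nb g|^a
  have hstep1 : (((univ : Finset ((A → V) × (B → V))).filter
      (fun p => ∀ a b, G.Adj (p.1 a) (p.2 b))).card : ℕ)
      = ∑ g : B → V, (nb g).card ^ (a' + 1) := by
    rw [Finset.card_eq_sum_card_fiberwise (f := Prod.snd) (t := univ)
      (fun x _ => mem_univ _)]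
    refine Finset.sum_congr rfl fun g _ => ?_
    have hbij : (((univ : Finset ((A → V) × (B → V))).filter
        (fun p => ∀ a b, G.Adj (p.1 a) (p.2 b))).filter (fun p => p.2 = g))
        = ((univ : Finset ((A → V) × (B → V))).filter
            (fun p => (∀ i : A, p.1 i ∈ nb g) ∧ p.2 = g)) := by
      ext p
      simp only [mem_filter, mem_univ, true_and, hnbdef]
      constructor
      · rintro ⟨h1, rfl⟩
        exact ⟨fun i j => h1 i j, rfl⟩
      · rintro ⟨h1, rfl⟩
        exact ⟨fun i j => h1 i j, rfl⟩
    rw [hbij]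
    have hcard : ((univ : Finset ((A → V) × (B → V))).filter
        (fun p => (∀ i : A, p.1 i ∈ nb g) ∧ p.2 = g)).card
        = ((univ : Finset (A → V)).filter (fun f => ∀ i, f i ∈ nb g)).card := by
      apply Finset.card_bij (fun p _ => p.1)
      · intro p hp
        simp only [mem_filter, mem_univ, true_and] at hp ⊢
        exact hp.1
      · intro p hp q hq h
        simp only [mem_filter, mem_univ, true_and] at hp hq
        exact Prod.ext h (hp.2.trans hq.2.symm)
      · intro f hf
        simp only [mem_filter, mem_univ, true_and] at hf
        exact ⟨(f, g), by simp [hf], rfl⟩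
    rw [hcard, card_pi_filter, hA]
  -- step 2 : ∑_g |nb g| = ∑_v d(v)^b
  have hstep2 : ∑ g : B → V, (nb g).card = ∑ v : V, (G.degree v) ^ (b' + 1) := by
    have hc : ∀ g : B → V, (nb g).card
        = ∑ v : V, if (∀ j : B, G.Adj v (g j)) then 1 else 0 :=
      fun g => Finset.card_filter _ _
    simp only [hc]
    rw [Finset.sum_comm]
    refine Finset.sum_congr rfl fun v _ => ?_
    have h1 : (∑ g : B → V, if (∀ j : B, G.Adj v (g j)) then 1 else 0)
        = ((univ : Finset (B → V)).filter (fun g => ∀ j, g j ∈ G.neighborFinset v)).card := by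
      rw [Finset.card_filter]
      exact Finset.sum_congr rfl fun g _ => by simp [SimpleGraph.mem_neighborFinset]
    rw [h1, card_pi_filter, hB]
    rfl
  -- real versions
  have hNs0 : (0:ℝ) < (N:ℝ) := by exact_mod_cast hN
  have key1 : (∑ v, (G.degree v : ℝ)) ^ (b' + 1)
      ≤ (∑ v, (G.degree v : ℝ) ^ (b' + 1)) * (N:ℝ) ^ b' := by
    have h := pow_sum_div_card_le_sum_pow (s := (univ : Finset V))
      (f := fun v => (G.degree v : ℝ)) (fun _ _ => by positivity) b'
    rw [Finset.card_univ, ← hNdef, div_le_iff₀ (by positivity)] at h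
    exact h
  have hX : ε ^ (b' + 1) * (N:ℝ) ^ (b' + 2) ≤ ∑ v, (G.degree v : ℝ) ^ (b' + 1) := by
    refine le_of_mul_le_mul_right ?_ (show (0:ℝ) < (N:ℝ) ^ b' by positivity)
    calc ε ^ (b' + 1) * (N:ℝ) ^ (b' + 2) * (N:ℝ) ^ b'
        = (ε * (N:ℝ) ^ 2) ^ (b' + 1) := by ring
      _ ≤ (∑ v, (G.degree v : ℝ)) ^ (b' + 1) := pow_le_pow_left₀ (by positivity) hm _
      _ ≤ (∑ v, (G.degree v : ℝ) ^ (b' + 1)) * (N:ℝ) ^ b' := key1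
  have key2 : (∑ g : B → V, ((nb g).card : ℝ)) ^ (a' + 1)
      ≤ (∑ g : B → V, ((nb g).card : ℝ) ^ (a' + 1)) * ((N:ℝ) ^ (b' + 1)) ^ a' := by
    have h := pow_sum_div_card_le_sum_pow (s := (univ : Finset (B → V)))
      (f := fun g => ((nb g).card : ℝ)) (fun _ _ => by positivity) a'
    have hcard : (((univ : Finset (B → V)).card : ℝ)) = (N:ℝ) ^ (b' + 1) := by
      rw [Finset.card_univ, Fintype.card_fun, hB, ← hNdef]
      push_cast
      ring
    rw [hcard, div_le_iff₀ (by positivity)] at h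
    exact h
  have hsum_nb : (∑ g : B → V, ((nb g).card : ℝ)) = ∑ v, (G.degree v : ℝ) ^ (b' + 1) := by
    exact_mod_cast congrArg (Nat.cast : ℕ → ℝ) hstep2
  have hScard : (((univ : Finset ((A → V) × (B → V))).filter
      (fun p => ∀ a b, G.Adj (p.1 a) (p.2 b))).card : ℝ)
      = ∑ g : B → V, ((nb g).card : ℝ) ^ (a' + 1) := by
    exact_mod_cast congrArg (Nat.cast : ℕ → ℝ) hstep1
  rw [hScard, hA, hB]
  refine le_of_mul_le_mul_right ?_ (show (0:ℝ) < (N:ℝ) ^ ((b' + 1) * a') by positivity)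
  have hmain : (ε ^ (b' + 1) * (N:ℝ) ^ (b' + 2)) ^ (a' + 1)
      ≤ (∑ g : B → V, ((nb g).card : ℝ) ^ (a' + 1)) * (N:ℝ) ^ ((b' + 1) * a') := by
    calc (ε ^ (b' + 1) * (N:ℝ) ^ (b' + 2)) ^ (a' + 1)
        ≤ (∑ g : B → V, ((nb g).card : ℝ)) ^ (a' + 1) := by
          refine pow_le_pow_left₀ (by positivity) ?_ _
          rw [hsum_nb]; exact hX
      _ ≤ (∑ g : B → V, ((nb g).card : ℝ) ^ (a' + 1)) * ((N:ℝ) ^ (b' + 1)) ^ a' := key2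
      _ = (∑ g : B → V, ((nb g).card : ℝ) ^ (a' + 1)) * (N:ℝ) ^ ((b' + 1) * a') := by
          rw [← pow_mul]
  refine le_trans (le_of_eq (by ring)) hmain

/-- Bound on the number of non-injective functions. -/
lemma noninj_card {β V : Type*} [Fintype β] [Fintype V] [DecidableEq β]
    [DecidablePred (fun f : β → V => ¬ Function.Injective f)] :
    ((univ : Finset (β → V)).filter (fun f => ¬ Function.Injective f)).card
      ≤ (Fintype.card β) ^ 2 * (Fintype.card V) ^ (Fintype.card β - 1) := by
  classical
  have hsub : ((univ : Finset (β → V)).filter (fun f => ¬ Function.Injective f))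
      ⊆ Finset.biUnion ((univ : Finset (β × β)).filter (fun q => q.1 ≠ q.2))
          (fun q => (univ : Finset (β → V)).filter (fun f => f q.1 = f q.2)) := by
    intro f hf
    simp only [mem_filter, mem_univ, true_and] at hf
    obtain ⟨x, y, hfe, hne⟩ := Function.not_injective_iff.mp hf
    exact Finset.mem_biUnion.mpr ⟨(x, y), by simp [hne], by simp [hfe]⟩
  refine (Finset.card_le_card hsub).trans (Finset.card_biUnion_le.trans ?_)
  have hone : ∀ q ∈ (univ : Finset (β × β)).filter (fun q => q.1 ≠ q.2),
      ((univ : Finset (β → V)).filter (fun f => f q.1 = f q.2)).card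
        ≤ (Fintype.card V) ^ (Fintype.card β - 1) := by
    rintro ⟨x, y⟩ hq
    simp only [mem_filter, mem_univ, true_and] at hq
    have hcle := Finset.card_le_card_of_injOn
      (f := fun f : β → V => (fun z : {z : β // ¬ z = y} => f z.1))
      (s := (univ : Finset (β → V)).filter (fun f => f x = f y))
      (t := (univ : Finset ({z : β // ¬ z = y} → V)))
      (fun a _ => mem_univ _) ?_
    · refine hcle.trans (le_of_eq ?_)
      rw [Finset.card_univ, Fintype.card_fun]
      congr 1
      rw [Fintype.card_subtype_compl, Fintype.card_subtype_eq]
    · intro f hf g hg h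
      simp only [Finset.coe_filter, Set.mem_setOf_eq, mem_univ, true_and] at hf hg
      funext z
      by_cases hz : z = y
      · subst hz
        have h1 : f x = g x := congrFun h ⟨x, hq⟩
        rw [← hf, h1, hg]
      · exact congrFun h ⟨z, hz⟩
  refine (Finset.sum_le_sum hone).trans ?_
  rw [Finset.sum_const, smul_eq_mul]
  apply Nat.mul_le_mul_right
  calc ((univ : Finset (β × β)).filter (fun q => q.1 ≠ q.2)).card
      ≤ (univ : Finset (β × β)).card := Finset.card_le_card (Finset.filter_subset _ _)
    _ = Fintype.card β * Fintype.card β := by rw [Finset.card_univ, Fintype.card_prod]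
    _ = (Fintype.card β) ^ 2 := (sq (Fintype.card β)).symm

/-- An injective graph hom gives a subgraph copy. -/
lemma iso_map {β V : Type*} {H : SimpleGraph β} {G : SimpleGraph V}
    (f : H →g G) (hf : Function.Injective f) :
    Nonempty (H ≃g (SimpleGraph.Subgraph.map f ⊤).coe) := by
  have hverts : Set.range f = (SimpleGraph.Subgraph.map f ⊤).verts := by
    rw [SimpleGraph.Subgraph.map_verts]
    simp
  refine ⟨⟨(Equiv.ofInjective f hf).trans (Equiv.setCongr hverts), ?_⟩⟩
  intro x y
  simp only [Equiv.trans_apply, Equiv.setCongr_apply, Equiv.ofInjective_apply,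
    SimpleGraph.Subgraph.coe_adj, SimpleGraph.Subgraph.map_adj, Relation.Map,
    SimpleGraph.Subgraph.top_adj]
  constructor
  · rintro ⟨a, b, hab, ha, hb⟩
    rwa [← hf ha, ← hf hb]
  · intro h
    exact ⟨x, y, h, rfl, rfl⟩

/-- Splitting functions along a 2-colouring. -/
lemma card_split {β V : Type*} [Fintype β] [Fintype V] [DecidableEq β] (col : β → Fin 2)
    (G : SimpleGraph V) [DecidableRel G.Adj] :
    (((univ : Finset (({x : β // col x = 0} → V) × ({x : β // ¬ col x = 0} → V))).filter
        (fun p => ∀ i j, G.Adj (p.1 i) (p.2 j))).card)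
      = (((univ : Finset (β → V)).filter
          (fun f => ∀ x y, col x = 0 → ¬ col y = 0 → G.Adj (f x) (f y))).card) := by
  classical
  apply Finset.card_bij
    (fun p _ => (fun x : β => if hx : col x = 0 then p.1 ⟨x, hx⟩ else p.2 ⟨x, hx⟩))
  · intro p hp
    simp only [mem_filter, mem_univ, true_and] at hp ⊢
    intro x y hx hy
    rw [dif_pos hx, dif_neg hy]
    exact hp ⟨x, hx⟩ ⟨y, hy⟩
  · intro p hp q hq h
    simp only [mem_filter, mem_univ, true_and] at hp hq
    have h1 : p.1 = q.1 := by
      funext i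
      have := congrFun h i.1
      rwa [dif_pos i.2, dif_pos i.2] at this
    have h2 : p.2 = q.2 := by
      funext j
      have := congrFun h j.1
      rwa [dif_neg j.2, dif_neg j.2] at this
    exact Prod.ext h1 h2
  · intro f hf
    simp only [mem_filter, mem_univ, true_and] at hf
    refine ⟨(fun i => f i.1, fun j => f j.1), ?_, ?_⟩
    · simp only [mem_filter, mem_univ, true_and]
      exact fun i j => hf i.1 j.1 i.2 j.2
    · funext x
      by_cases hx : col x = 0
      · rw [dif_pos hx]
      · rw [dif_neg hx]

theorem stmt_6' {α β : Type*} [Fintype α] [Fintype β]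
    (F : SimpleGraph α) (H : SimpleGraph β)
    (hF : F.edgeSet.Nonempty) (hbip : H.Colorable 2) :
    ∃ c C : ℝ, 0 < c ∧ 0 < C ∧ ∀ ε : ℝ, 0 < ε → ε < 1 → ∃ n₀ : ℕ, ∀ n : ℕ, n₀ ≤ n →
    ∀ G : SimpleGraph (Fin n), FarFromFree F G ε →
      c * ε ^ C * (n : ℝ) ^ (Nat.card β) ≤ (copyCount H G : ℝ) := by
  classical
  obtain ⟨col⟩ := hbip
  set v := Fintype.card β with hv
  have hFadj : ∃ x y, F.Adj x y := by
    obtain ⟨e, he⟩ := hF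
    induction e using Sym2.ind with
    | _ x y => exact ⟨x, y, he⟩
  refine ⟨1 / (2 * ((v : ℝ) + 1) ^ v), ((v ^ 2 + 1 : ℕ) : ℝ), by positivity,
    by exact_mod_cast Nat.succ_pos (v ^ 2), ?_⟩
  intro ε hε0 hε1
  refine ⟨max 1 ⌈(2 * (v : ℝ) ^ 2 + 1) / ε ^ (v ^ 2 + 1)⌉₊, fun n hn G hfar => ?_⟩
  have hn1 : 1 ≤ n := le_trans (le_max_left _ _) hn
  have hNpos : (0:ℝ) < (n:ℝ) := by exact_mod_cast hn1
  have hεpow : (0:ℝ) < ε ^ (v ^ 2 + 1) := by positivity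
  have hbig : 2 * (v : ℝ) ^ 2 + 1 ≤ ε ^ (v ^ 2 + 1) * (n : ℝ) := by
    have hceil : (2 * (v : ℝ) ^ 2 + 1) / ε ^ (v ^ 2 + 1) ≤ (n : ℝ) := by
      refine le_trans (Nat.le_ceil _) ?_
      exact_mod_cast le_trans (le_max_right _ _) hn
    rw [div_le_iff₀ hεpow] at hceil
    linarith [hceil]
  -- many edges
  have hedge : ε * (n : ℝ) ^ 2 ≤ (G.edgeFinset.card : ℝ) := by
    by_contra hlt
    push_neg at hlt
    have h1 : ((G.edgeSet \ (⊥ : SimpleGraph (Fin n)).edgeSet).ncard : ℝ)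
        < ε * (Nat.card (Fin n) : ℝ) ^ 2 := by
      rw [SimpleGraph.edgeSet_bot, Set.diff_empty, Nat.card_eq_fintype_card,
        Fintype.card_fin]
      have h2 : G.edgeSet.ncard = G.edgeFinset.card := by
        rw [← SimpleGraph.coe_edgeFinset, Set.ncard_coe_finset]
      rw [h2]
      exact hlt
    obtain ⟨f, -⟩ := hfar ⊥ bot_le h1
    obtain ⟨x, y, hxy⟩ := hFadj
    simpa using f.map_adj hxy
  have hdeg : ε * ((Fintype.card (Fin n)) : ℝ) ^ 2 ≤ ∑ w, (G.degree w : ℝ) := by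
    rw [Fintype.card_fin]
    have h2 : (∑ w, G.degree w) = 2 * G.edgeFinset.card :=
      G.sum_degrees_eq_twice_card_edges
    have h3 : (∑ w, (G.degree w : ℝ)) = 2 * (G.edgeFinset.card : ℝ) := by
      exact_mod_cast h2
    have h4 : (0:ℝ) ≤ (G.edgeFinset.card : ℝ) := Nat.cast_nonneg _
    linarith
  -- KST bound
  have hkst := kst_count (A := {x : β // col x = 0}) (B := {x : β // ¬ col x = 0})
    (G := G) ε hε0.le (by rw [Fintype.card_fin]; exact hn1) hdeg
  rw [Fintype.card_fin] at hkst
  rw [card_split (⇑col) G] at hkst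
  set sa := Fintype.card {x : β // col x = 0} with hsa
  set sb := Fintype.card {x : β // ¬ col x = 0} with hsb
  have hab : sa + sb = v := by
    rw [hsb, Fintype.card_subtype_compl, ← hv]
    have h5 : sa ≤ v := by rw [hsa, hv]; exact Fintype.card_subtype_le _
    omega
  have habsq : sa * sb ≤ v ^ 2 := by
    have h5 : sa ≤ v := by rw [hsa, hv]; exact Fintype.card_subtype_le _
    have h6 : sb ≤ v := by rw [hsb, hv]; exact Fintype.card_subtype_le _
    calc sa * sb ≤ v * v := Nat.mul_le_mul h5 h6
      _ = v ^ 2 := (sq v).symm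
  set SB := (univ : Finset (β → Fin n)).filter
    (fun f => ∀ x y, col x = 0 → ¬ col y = 0 → G.Adj (f x) (f y)) with hSB
  set T := (univ : Finset (β → Fin n)).filter
    (fun f => Function.Injective f ∧ ∀ x y, H.Adj x y → G.Adj (f x) (f y)) with hT
  set NI := (univ : Finset (β → Fin n)).filter
    (fun f => ¬ Function.Injective f) with hNI
  -- split
  have hsplit : SB.card ≤ T.card + NI.card := by
    refine le_trans (Finset.card_le_card ?_) (Finset.card_union_le _ _)
    intro f hf
    rw [hSB, Finset.mem_filter] at hf
    rw [Finset.mem_union]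
    by_cases hinj : Function.Injective f
    · left
      rw [hT, Finset.mem_filter]
      refine ⟨mem_univ _, hinj, fun x y hxy => ?_⟩
      have hcol := col.valid hxy
      by_cases hx : col x = 0
      · exact hf.2 x y hx (fun h => hcol (by rw [hx, h]))
      · have hy : col y = 0 := by
          by_contra hy
          exact hcol ((Fin.eq_one_of_ne_zero _ hx).trans
            (Fin.eq_one_of_ne_zero _ hy).symm)
        exact (hf.2 y x hy hx).symm
    · right
      rw [hNI, Finset.mem_filter]
      exact ⟨mem_univ _, hinj⟩
  -- noninjective bound
  have hNIcard : NI.card ≤ v ^ 2 * n ^ (v - 1) := by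
    have h5 := noninj_card (β := β) (V := Fin n)
    rw [Fintype.card_fin, ← hv] at h5
    exact h5
  -- the map to subgraphs
  set Φ : (β → Fin n) → G.Subgraph := fun f =>
    if h : ∀ x y, H.Adj x y → G.Adj (f x) (f y) then
      SimpleGraph.Subgraph.map (⟨f, fun {x y} hxy => h x y hxy⟩ : H →g G) ⊤
    else ⊥ with hΦ
  have hΦeq : ∀ f, (∀ x y, H.Adj x y → G.Adj (f x) (f y)) →
      ∀ (h : ∀ x y, H.Adj x y → G.Adj (f x) (f y)),
      Φ f = SimpleGraph.Subgraph.map (⟨f, fun {x y} hxy => h x y hxy⟩ : H →g G) ⊤ := by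
    intro f hp h
    rw [hΦ]
    exact dif_pos h
  have hfiber : ∀ G' ∈ T.image Φ, (T.filter (fun f => Φ f = G')).card ≤ (v + 1) ^ v := by
    intro G' hG'
    obtain ⟨f₀, hf₀T, hf₀⟩ := Finset.mem_image.mp hG'
    have hrange : ∀ f ∈ T.filter (fun f => Φ f = G'), Set.range f = G'.verts := by
      intro f hf
      obtain ⟨hfT, hfe⟩ := Finset.mem_filter.mp hf
      rw [hT, Finset.mem_filter] at hfT
      rw [← hfe, hΦeq f hfT.2.2 hfT.2.2, SimpleGraph.Subgraph.map_verts]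
      simp only [SimpleGraph.Subgraph.verts_top, Set.image_univ]
      rfl
    by_cases hβ : Nonempty β
    · have hf₀mem : f₀ ∈ T.filter (fun f => Φ f = G') :=
        Finset.mem_filter.mpr ⟨hf₀T, hf₀⟩
      refine le_trans (Finset.card_le_card_of_injOn
        (f := fun f => (fun x : β => Function.invFun f₀ (f x)))
        (fun _ _ => mem_univ _) ?_) ?_
      · intro f hf g hg h
        simp only [Finset.mem_coe] at hf hg
        funext x
        have hfx : f x ∈ Set.range f₀ := by
          rw [hrange f₀ hf₀mem, ← hrange f hf]
          exact Set.mem_range_self x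
        have hgx : g x ∈ Set.range f₀ := by
          rw [hrange f₀ hf₀mem, ← hrange g hg]
          exact Set.mem_range_self x
        have e1 : f₀ (Function.invFun f₀ (f x)) = f x := Function.invFun_eq hfx
        have e2 : f₀ (Function.invFun f₀ (g x)) = g x := Function.invFun_eq hgx
        have e3 := congrFun h x
        simp only at e3
        rw [← e1, e3, e2]
      · rw [Finset.card_univ, Fintype.card_fun, ← hv]
        exact Nat.pow_le_pow_left (Nat.le_succ v) v
    · have hsing : Subsingleton (β → Fin n) :=
        ⟨fun f g => funext fun x => absurd ⟨x⟩ hβ⟩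
      refine le_trans (Finset.card_le_one.mpr ?_) ?_
      · intro f _ g _
        exact Subsingleton.elim f g
      · exact Nat.one_le_pow _ _ (Nat.succ_pos v)
  have hTcard : T.card ≤ (v + 1) ^ v * (T.image Φ).card :=
    Finset.card_le_mul_card_image _ _ hfiber
  -- image lands in copies
  have himg : (T.image Φ).card ≤ copyCount H G := by
    have hsub : ↑(T.image Φ) ⊆ {G' : G.Subgraph | Nonempty (H ≃g G'.coe)} := by
      intro G' hG'
      simp only [Finset.coe_image, Set.mem_image, Finset.mem_coe] at hG'
      obtain ⟨f, hfT, rfl⟩ := hG'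
      rw [hT, Finset.mem_filter] at hfT
      show Nonempty (H ≃g (Φ f).coe)
      rw [hΦeq f hfT.2.2 hfT.2.2]
      exact iso_map _ hfT.2.1
    rw [copyCount, ← Set.ncard_coe_finset]
    exact Set.ncard_le_ncard hsub (Set.toFinite _)
  -- numeric assembly
  rw [Real.rpow_natCast, Nat.card_eq_fintype_card, ← hv]
  have c1 : ε ^ (v ^ 2 + 1) * (n : ℝ) ^ v ≤ (SB.card : ℝ) := by
    have hmono : ε ^ (v ^ 2 + 1) ≤ ε ^ (sa * sb) :=
      pow_le_pow_of_le_one hε0.le hε1.le (le_trans habsq (Nat.le_succ _))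
    calc ε ^ (v ^ 2 + 1) * (n : ℝ) ^ v
        ≤ ε ^ (sa * sb) * (n : ℝ) ^ v :=
          mul_le_mul_of_nonneg_right hmono (by positivity)
      _ = ε ^ (sa * sb) * (n : ℝ) ^ (sa + sb) := by rw [hab]
      _ ≤ (SB.card : ℝ) := hkst
  have c2 : (SB.card : ℝ) ≤ (T.card : ℝ) + (NI.card : ℝ) := by exact_mod_cast hsplit
  have c3 : (NI.card : ℝ) ≤ (v : ℝ) ^ 2 * (n : ℝ) ^ (v - 1) := by exact_mod_cast hNIcard
  have c4 : (T.card : ℝ) ≤ ((v : ℝ) + 1) ^ v * (copyCount H G : ℝ) := by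
    have h5 : (T.card : ℝ) ≤ ((v + 1) ^ v * (T.image Φ).card : ℕ) := by exact_mod_cast hTcard
    have h6 : ((T.image Φ).card : ℝ) ≤ (copyCount H G : ℝ) := by exact_mod_cast himg
    push_cast at h5
    nlinarith [h5, h6, pow_nonneg (by positivity : (0:ℝ) ≤ (v:ℝ) + 1) v]
  have c5 : (v : ℝ) ^ 2 * (n : ℝ) ^ (v - 1) ≤ (1 / 2) * (ε ^ (v ^ 2 + 1) * (n : ℝ) ^ v) := by
    by_cases hv0 : v = 0
    · rw [hv0]
      simp only [Nat.cast_zero, ne_eq, OfNat.ofNat_ne_zero, not_false_eq_true, zero_pow,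
        zero_mul]
      positivity
    · have hvv : (n : ℝ) * (n : ℝ) ^ (v - 1) = (n : ℝ) ^ v := by
        rw [← pow_succ']
        congr 1
        omega
      have h7 : (2 * (v : ℝ) ^ 2 + 1) * (n : ℝ) ^ (v - 1)
          ≤ (ε ^ (v ^ 2 + 1) * (n : ℝ)) * (n : ℝ) ^ (v - 1) :=
        mul_le_mul_of_nonneg_right hbig (by positivity)
      have h8 : (ε ^ (v ^ 2 + 1) * (n : ℝ)) * (n : ℝ) ^ (v - 1)
          = ε ^ (v ^ 2 + 1) * (n : ℝ) ^ v := by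
        rw [mul_assoc, hvv]
      rw [h8] at h7
      have h9 : (0:ℝ) ≤ (n : ℝ) ^ (v - 1) := by positivity
      linarith
  have hK : (0:ℝ) < 2 * ((v : ℝ) + 1) ^ v := by positivity
  rw [show 1 / (2 * ((v : ℝ) + 1) ^ v) * ε ^ (v ^ 2 + 1) * (n : ℝ) ^ v
      = (ε ^ (v ^ 2 + 1) * (n : ℝ) ^ v) / (2 * ((v : ℝ) + 1) ^ v) by ring,
    div_le_iff₀ hK]
  linarith [c1, c2, c3, c4, c5]

/-- If `F` has at least one edge, then every bipartite graph
(vertex set partitioned into two independent sets, i.e. 2-colourable) is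
`F`-abundant. -/
theorem stmt_6 {α β : Type*} [Fintype α] [Fintype β]
    (F : SimpleGraph α) (H : SimpleGraph β)
    (hF : F.edgeSet.Nonempty) (hbip : H.Colorable 2) :
    Abundant F H :=
  stmt_6' F H hF hbip
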